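/- If a probability vector of length d has the form λ1 = λ2 = ... = λ_{k-1}, λ_k arbitrary with λ_{k-1} ≥ λ_k ≥ 0, and λ_{k+1} = ... = λ_d = 0, with purity γ = ∑ λi², then 1/k ≤ γ ≤ 1/(k-1); in particular the integer k with this property is uniquely determined by γ (when 1/γ is not an integer). -/
import Mathlib


/-- If a probability vector has the form λ1 = ⋯ = λ_{k-1} ≥ λ_k ≥ 0 with the
rest zero, i.e. (k-1)λ1 + λ_k = 1 and purity (k-1)λ1² + λ_k² = γ, then
1/k ≤ γ ≤ 1/(k-1); moreover such k is uniquely determined by γ when 1/γ is not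
an integer. -/
theorem stmt3 (k : ℕ) (hk : 2 ≤ k) (l1 lk γ : ℝ) (hord : lk ≤ l1) (h0 : 0 ≤ lk)
    (hsum : ((k:ℝ)-1) * l1 + lk = 1) (hpur : ((k:ℝ)-1) * l1 ^ 2 + lk ^ 2 = γ) :
    (1/(k:ℝ) ≤ γ ∧ γ ≤ 1/((k:ℝ)-1)) ∧
    (∀ k' : ℕ, 2 ≤ k' → 1/(k':ℝ) ≤ γ → γ ≤ 1/((k':ℝ)-1) →
      (¬ ∃ m : ℤ, 1/γ = (m:ℝ)) → k' = k) := by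
  have hn : (1:ℝ) ≤ (k:ℝ) - 1 := by
    have : (2:ℝ) ≤ (k:ℝ) := by exact_mod_cast hk
    linarith
  have hkpos : (0:ℝ) < (k:ℝ) := by linarith
  have hlow : 1/(k:ℝ) ≤ γ := by
    rw [div_le_iff₀ hkpos]
    nlinarith [sq_nonneg (l1 - lk), mul_nonneg (sub_nonneg.2 hn) (sq_nonneg (l1 - lk))]
  have hhigh : γ ≤ 1/((k:ℝ)-1) := by
    rw [le_div_iff₀ (by linarith : (0:ℝ) < (k:ℝ)-1)]
    nlinarith [mul_nonneg h0 (sub_nonneg.2 hord), mul_nonneg (mul_nonneg h0 (sub_nonneg.2 hord)) (by linarith : (0:ℝ) ≤ (k:ℝ)-1)]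
  refine ⟨⟨hlow, hhigh⟩, ?_⟩
  have hγpos : 0 < γ := lt_of_lt_of_le (by positivity) hlow
  have key : ∀ k' : ℕ, 2 ≤ k' → 1/(k':ℝ) ≤ γ → γ ≤ 1/((k':ℝ)-1) →
      (¬ ∃ m : ℤ, 1/γ = (m:ℝ)) → ((k':ℝ) - 1 < 1/γ ∧ 1/γ < (k':ℝ)) := by
    intro k' hk' h1 h2 hni
    have hn' : (1:ℝ) ≤ (k':ℝ) - 1 := by
      have : (2:ℝ) ≤ (k':ℝ) := by exact_mod_cast hk'
      linarith
    have ha : (k':ℝ) - 1 ≤ 1/γ := by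
      rw [le_div_iff₀ hγpos]
      rw [le_div_iff₀ (by linarith : (0:ℝ) < (k':ℝ)-1)] at h2
      linarith
    have hb : 1/γ ≤ (k':ℝ) := by
      rw [div_le_iff₀ hγpos]
      rw [div_le_iff₀ (by linarith : (0:ℝ) < (k':ℝ))] at h1
      linarith
    constructor
    · rcases lt_or_eq_of_le ha with h | h
      · exact h
      · exact absurd ⟨(k':ℤ) - 1, by push_cast; linarith⟩ hni
    · rcases lt_or_eq_of_le hb with h | h
      · exact h
      · exact absurd ⟨(k':ℤ), by push_cast; linarith⟩ hni
  intro k' hk' h1 h2 hni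
  obtain ⟨ha', hb'⟩ := key k' hk' h1 h2 hni
  obtain ⟨ha, hb⟩ := key k hk hlow hhigh hni
  have h1 : (k':ℝ) - 1 < (k:ℝ) := lt_trans ha' hb
  have h2 : (k:ℝ) - 1 < (k':ℝ) := lt_trans ha hb'
  have : (k':ℕ) < k + 1 := by exact_mod_cast (by linarith : (k':ℝ) < (k:ℝ) + 1)
  have : (k:ℕ) < k' + 1 := by exact_mod_cast (by linarith : (k:ℝ) < (k':ℝ) + 1)
  omega
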